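/- Let H be the group of order 63 with underlying set ZMod 7 × ZMod 9 and multiplication (a,c) * (a',c') = (a + 2^c * a', c + c') (the semidirect product ℤ/7 ⋊ ℤ/9 in which the generator 1 of ℤ/9 acts on ℤ/7 by multiplication by 2), and let G = ZMod 2 × H (the group C2 × (C7 : C9) of order 126). There exists a family ℬ of 6-element finite subsets of G that is invariant under left translation and such that every pair of distinct elements of G is contained in exactly one member of ℬ. In other words, there exists a Steiner system S(2,6,126) (unital of order 5) on which C2 × (C7 : C9) acts point-transitively and effectively. -/
import Mathlib


/-- Multiplication of the semidirect product `H = ℤ/7 ⋊ ℤ/9` with underlying set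
`ZMod 7 × ZMod 9`, where the generator `1` of `ℤ/9` acts on `ℤ/7` by multiplication
by `2`: `(a,c) * (a',c') = (a + 2^c * a', c + c')`. -/
def mulH13 (p q : ZMod 7 × ZMod 9) : ZMod 7 × ZMod 9 :=
  (p.1 + 2 ^ p.2.val * q.1, p.2 + q.2)

/-- The group `C2 × (C7 : C9)` of order 126. -/
abbrev G13 := ZMod 2 × (ZMod 7 × ZMod 9)

/-- Left translation by `g` in `C2 × (C7 : C9)`. -/
def leftTr13 (g x : G13) : G13 := (g.1 + x.1, mulH13 g.2 x.2)

/-! Auxiliary group API for `leftTr13`. -/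

set_option maxRecDepth 100000
set_option maxHeartbeats 4000000

def e13 : G13 := (0, (0, 0))

def inv13 (g : G13) : G13 := (g.1, (-(2 ^ (-g.2.2).val * g.2.1), -g.2.2))

lemma pow2add13 : ∀ a b : ZMod 9, (2 : ZMod 7) ^ (a + b).val = 2 ^ a.val * 2 ^ b.val := by
  decide

lemma comp13 (g h x : G13) : leftTr13 g (leftTr13 h x) = leftTr13 (leftTr13 g h) x := by
  unfold leftTr13 mulH13
  refine Prod.ext ?_ (Prod.ext ?_ ?_)
  · exact (add_assoc _ _ _).symm
  · show g.2.1 + 2 ^ g.2.2.val * (h.2.1 + 2 ^ h.2.2.val * x.2.1)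
        = (g.2.1 + 2 ^ g.2.2.val * h.2.1) + 2 ^ ((g.2.2 + h.2.2).val) * x.2.1
    rw [pow2add13]; ring
  · exact (add_assoc _ _ _).symm

lemma idl13 : ∀ x : G13, leftTr13 e13 x = x := by decide

lemma idr13 : ∀ g : G13, leftTr13 g e13 = g := by decide

lemma invl13 : ∀ g : G13, leftTr13 (inv13 g) g = e13 := by decide

lemma invr13 : ∀ g : G13, leftTr13 g (inv13 g) = e13 := by decide

lemma inj13 (g : G13) : Function.Injective (leftTr13 g) := by
  intro x y h
  have h2 := congrArg (leftTr13 (inv13 g)) h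
  rwa [comp13, comp13, invl13, idl13, idl13] at h2

lemma gb_binv13 (g b : G13) : leftTr13 (leftTr13 g b) (inv13 b) = g := by
  rw [← comp13, invr13, idr13]

lemma cancel13 (g b x : G13) :
    leftTr13 (inv13 (leftTr13 g b)) (leftTr13 g x) = leftTr13 (inv13 b) x := by
  apply inj13 (leftTr13 g b)
  rw [comp13 (leftTr13 g b) (inv13 (leftTr13 g b)), invr13, idl13, comp13, gb_binv13]

/-- Base blocks: `D13 0` is the subgroup `K = Z(G)` of order 6, and `D13 1`–`D13 4`
form a relative difference family: their differences `b⁻¹c` cover `G ∖ K` exactly once. -/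
def D13 : Fin 5 → Finset G13 :=
  ![{(0,(0,0)), (1,(0,0)), (0,(0,3)), (1,(0,3)), (0,(0,6)), (1,(0,6))},
    {(0,(0,0)), (0,(0,2)), (0,(2,8)), (0,(2,0)), (1,(1,1)), (0,(6,3))},
    {(0,(0,0)), (1,(1,2)), (1,(2,6)), (0,(6,7)), (0,(6,2)), (0,(2,2))},
    {(0,(0,0)), (1,(2,5)), (0,(6,1)), (1,(1,8)), (0,(5,5)), (1,(6,8))},
    {(0,(0,0)), (0,(6,4)), (1,(3,6)), (1,(6,5)), (0,(1,2)), (0,(2,3))}]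

lemma card13 : ∀ i : Fin 5, (D13 i).card = 6 := by decide

lemma cover13 : ∀ d : G13, ∃ i : Fin 5, ∃ b ∈ D13 i, leftTr13 b d ∈ D13 i := by decide

lemma uniq13 : ∀ i j : Fin 5, ∀ b ∈ D13 i, ∀ c ∈ D13 i, ∀ b' ∈ D13 j, ∀ c' ∈ D13 j,
    b ≠ c → leftTr13 (inv13 b) c = leftTr13 (inv13 b') c' →
    (D13 i).image (leftTr13 (inv13 b)) = (D13 j).image (leftTr13 (inv13 b')) := by
  decide

theorem unital_C2xC7C9_exists :
    ∃ ℬ : Set (Finset G13),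
      (∀ B ∈ ℬ, B.card = 6) ∧
      (∀ g : G13, ∀ B ∈ ℬ, B.image (leftTr13 g) ∈ ℬ) ∧
      (∀ p q : G13, p ≠ q → ∃! B, B ∈ ℬ ∧ p ∈ B ∧ q ∈ B) := by
  refine ⟨{B | ∃ (i : Fin 5) (g : G13), B = (D13 i).image (leftTr13 g)}, ?_, ?_, ?_⟩
  · rintro B ⟨i, g, rfl⟩
    rw [Finset.card_image_of_injective _ (inj13 g), card13]
  · rintro g B ⟨i, h, rfl⟩
    refine ⟨i, leftTr13 g h, ?_⟩
    rw [Finset.image_image]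
    congr 1
    funext x
    exact comp13 g h x
  · intro p q hpq
    set d := leftTr13 (inv13 p) q with hd
    obtain ⟨i0, b0, hb0, hc0⟩ := cover13 d
    have hdne : d ≠ e13 := by
      intro h
      apply hpq
      have : leftTr13 p d = leftTr13 p e13 := by rw [h]
      rw [hd, comp13, invr13, idl13, idr13] at this
      exact this.symm
    -- the canonical block through p and q
    refine ⟨(D13 i0).image (leftTr13 (leftTr13 p (inv13 b0))), ⟨⟨i0, _, rfl⟩, ?_, ?_⟩, ?_⟩
    · -- p ∈ canonical block
      refine Finset.mem_image.2 ⟨b0, hb0, ?_⟩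
      rw [← comp13, invl13, idr13]
    · -- q ∈ canonical block
      refine Finset.mem_image.2 ⟨leftTr13 b0 d, hc0, ?_⟩
      rw [← comp13, comp13 (inv13 b0) b0 d, invl13, idl13, hd, comp13, invr13, idl13]
    · -- uniqueness
      rintro B ⟨⟨j, g, rfl⟩, hpB, hqB⟩
      obtain ⟨b', hb', hbp⟩ := Finset.mem_image.1 hpB
      obtain ⟨c', hc', hcq⟩ := Finset.mem_image.1 hqB
      have hbc : b' ≠ c' := by
        intro h; apply hpq; rw [← hbp, ← hcq, h]
      have hdiff : leftTr13 (inv13 b') c' = leftTr13 (inv13 b0) (leftTr13 b0 d) := by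
        rw [comp13 (inv13 b0) b0 d, invl13, idl13, hd, ← hbp, ← hcq, cancel13]
      have hkey := uniq13 j i0 b' hb' c' hc' b0 hb0 (leftTr13 b0 d) hc0 hbc hdiff
      have hg : leftTr13 p (inv13 b') = g := by rw [← hbp, gb_binv13]
      calc (D13 j).image (leftTr13 g)
          = ((D13 j).image (leftTr13 (inv13 b'))).image (leftTr13 p) := by
            rw [Finset.image_image]
            congr 1
            funext x
            rw [Function.comp_apply, comp13, hg]
        _ = ((D13 i0).image (leftTr13 (inv13 b0))).image (leftTr13 p) := by rw [hkey]
        _ = (D13 i0).image (leftTr13 (leftTr13 p (inv13 b0))) := by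
            rw [Finset.image_image]
            congr 1
            funext x
            exact comp13 p (inv13 b0) x
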